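/- For every g ∈ Λ̂_d and every ξ ∈ U_d, the evaluation ev_ξ(g) lies in the subring ℤ[1/d][ξ] of ℂ generated by 1/d and ξ. -/

import Mathlib

noncomputable section

open Polynomial

/-- The ring `Γ_d`: the localization of `ℤ[1/d][t^{±1}]` at the multiplicative set generated
by the cyclotomic polynomials `Φ_s(t)` with `gcd(s,d) > 1`, realized as a subring of `ℚ(t)`. -/
def Gd (d : ℕ) : Subring (RatFunc ℚ) :=
  Subring.closure
    ({((d : RatFunc ℚ))⁻¹, RatFunc.X, (RatFunc.X)⁻¹} ∪
      {x | ∃ s : ℕ, 1 ≤ s ∧ 1 < Nat.gcd s d ∧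
        x = (Polynomial.aeval RatFunc.X (cyclotomic s ℚ))⁻¹})

/-- The element `t` of `Γ_d`. -/
def tG (d : ℕ) : Gd d := ⟨RatFunc.X, Subring.subset_closure (by simp)⟩

/-- `(q;q)_n` as an element of `Γ_d`, where `q = t^d`. -/
def pochG (d n : ℕ) : Gd d := ∏ i ∈ Finset.range n, (1 - ((tG d) ^ d) ^ (i + 1))

/-- The principal ideal `((q;q)_n)` of `Γ_d`. -/
def idlG (d n : ℕ) : Ideal (Gd d) := Ideal.span {pochG d n}

lemma idlG_succ_le (d n : ℕ) : idlG d (n + 1) ≤ idlG d n := by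
  rw [idlG, Ideal.span_le, Set.singleton_subset_iff]
  exact Ideal.mem_span_singleton.2 ⟨_, Finset.prod_range_succ _ n⟩

set_option maxHeartbeats 2000000 in
set_option synthInstance.maxHeartbeats 1000000 in
/-- The Habiro-type ring `Λ̂_d = lim_n Γ_d/((q;q)_n)`, realized concretely as the ring of
sequences `(x_n)` with `x_n ∈ Γ_d/((q;q)_n)` compatible under the natural projections. -/
def LamHat (d : ℕ) : Subring (∀ n, Gd d ⧸ idlG d n) where
  carrier := {x | ∀ n,
    Ideal.Quotient.factor (idlG_succ_le d n) (x (n + 1)) = x n}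
  zero_mem' := fun n => map_zero _
  one_mem' := fun n => map_one _
  add_mem' := fun {a b} ha hb n => by
    simp only [Pi.add_apply, map_add, ha n, hb n]
  mul_mem' := fun {a b} ha hb n => by
    simp only [Pi.mul_apply, map_mul, ha n, hb n]
  neg_mem' := fun {a} ha n => by
    simp only [Pi.neg_apply, map_neg, ha n]

namespace Stmt16Aux

lemma aeval_int_mem (R : Subring ℂ) {z : ℂ} (hz : z ∈ R) (H : Polynomial ℤ) :
    Polynomial.aeval z H ∈ R := by
  induction H using Polynomial.induction_on' with
  | add p q hp hq => rw [map_add]; exact R.add_mem hp hq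
  | monomial n c =>
    rw [Polynomial.aeval_monomial]
    refine R.mul_mem ?_ (R.pow_mem hz n)
    simpa using intCast_mem R c

lemma zpow_mem (R : Subring ℂ) {z : ℂ} (hz : z ∈ R) {r : ℕ} (hr : r ≠ 0)
    (h1 : z ^ r = 1) (k : ℤ) : z ^ k ∈ R := by
  have hz0 : z ≠ 0 := by
    intro h
    rw [h, zero_pow hr] at h1
    exact zero_ne_one h1
  have hrZ : (r : ℤ) ≠ 0 := by exact_mod_cast hr
  have hmod : z ^ k = z ^ ((k % (r : ℤ)).toNat) := by
    have hnn : (0:ℤ) ≤ k % (r:ℤ) := Int.emod_nonneg k hrZ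
    have h2 : (((k % (r:ℤ)).toNat : ℤ)) = k % (r:ℤ) := Int.toNat_of_nonneg hnn
    calc z ^ k = z ^ (k % (r:ℤ) + (r:ℤ) * (k / (r:ℤ))) := by rw [Int.emod_add_mul_ediv]
      _ = z ^ (k % (r:ℤ)) * (z ^ (r:ℤ)) ^ (k / (r:ℤ)) := by
          rw [zpow_add₀ hz0, zpow_mul]
      _ = z ^ (k % (r:ℤ)) := by
          rw [zpow_natCast, h1, one_zpow, mul_one]
      _ = z ^ ((k % (r:ℤ)).toNat) := by
          rw [← zpow_natCast z ((k % (r:ℤ)).toNat), h2]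
  rw [hmod]
  exact R.pow_mem hz _

/-- The key arithmetic lemma: the value of `Φ_s` at a root of unity `ζ` (of order dividing
`r` coprime to `d`) is invertible in the subring `R` when `gcd(s,d) > 1`. -/
lemma key (d : ℕ) (hd : 1 ≤ d) (R : Subring ℂ) (hdR : ((d : ℂ))⁻¹ ∈ R)
    (ζ : ℂ) (hζR : ζ ∈ R) (r : ℕ) (hr0 : r ≠ 0) (h1 : ζ ^ r = 1)
    (hcop : Nat.Coprime r d) (s : ℕ) (hs : 1 ≤ s) (hgcd : 1 < Nat.gcd s d) :
    ∃ w ∈ R, (Polynomial.aeval ζ (cyclotomic s ℤ)) * w = 1 := by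
  have hζ0 : ζ ≠ 0 := by
    intro h
    rw [h, zero_pow hr0] at h1
    exact zero_ne_one h1
  set p := (Nat.gcd s d).minFac with hpdef
  have hp : p.Prime := Nat.minFac_prime (by omega)
  have hps : p ∣ s := (Nat.minFac_dvd _).trans (Nat.gcd_dvd_left s d)
  have hpd : p ∣ d := (Nat.minFac_dvd _).trans (Nat.gcd_dvd_right s d)
  obtain ⟨m, hm⟩ := hps
  have hm1 : 1 ≤ m := by
    rcases Nat.eq_zero_or_pos m with h | h
    · rw [h, mul_zero] at hm; omega
    · exact h
  -- polynomial identity and divisibility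
  set Φ : Polynomial ℤ := cyclotomic s ℤ with hΦdef
  set G : Polynomial ℤ := ∑ t ∈ Finset.range p, ((X : Polynomial ℤ) ^ m) ^ t with hGdef
  have hgeom : G * ((X : Polynomial ℤ) ^ m - 1) = (X : Polynomial ℤ) ^ s - 1 := by
    rw [hGdef, geom_sum_mul, ← pow_mul, mul_comm m p, ← hm]
  have hΦdvd : Φ ∣ (X : Polynomial ℤ) ^ s - 1 := cyclotomic.dvd_X_pow_sub_one s ℤ
  have hprime : Prime Φ :=
    UniqueFactorizationMonoid.irreducible_iff_prime.mp (cyclotomic.irreducible (by omega))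
  have hmlt : m < s := by
    have h2 : 2 * m ≤ p * m := Nat.mul_le_mul_right m hp.two_le
    omega
  have hnotdvd : ¬ Φ ∣ (X : Polynomial ℤ) ^ m - 1 := by
    intro hdvd
    set η : ℂ := Complex.exp (2 * Real.pi * Complex.I / s) with hηdef
    have hη : IsPrimitiveRoot η s := Complex.isPrimitiveRoot_exp s (by omega)
    have hroot : Polynomial.aeval η Φ = 0 := by
      have := hη.isRoot_cyclotomic (show 0 < s by omega)
      rw [Polynomial.IsRoot] at this
      rw [hΦdef, Polynomial.aeval_def, Polynomial.eval₂_eq_eval_map]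
      have hmap : Polynomial.map (algebraMap ℤ ℂ) (cyclotomic s ℤ) = cyclotomic s ℂ := by
        rw [show algebraMap ℤ ℂ = Int.castRingHom ℂ from rfl, map_cyclotomic_int]
      rw [hmap]; exact this
    obtain ⟨c, hc⟩ := hdvd
    have : Polynomial.aeval η ((X : Polynomial ℤ) ^ m - 1) = 0 := by
      rw [hc, map_mul, hroot, zero_mul]
    have hηm : η ^ m = 1 := by
      rw [map_sub, map_pow, Polynomial.aeval_X, map_one, sub_eq_zero] at this
      exact this
    have := hη.dvd_of_pow_eq_one m hηm
    have := Nat.le_of_dvd (by omega) this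
    omega
  have hΦG : Φ ∣ G := by
    rcases hprime.2.2 G ((X : Polynomial ℤ) ^ m - 1) (by rw [hgeom]; exact hΦdvd) with h | h
    · exact h
    · exact absurd h hnotdvd
  obtain ⟨H, hH⟩ := hΦG
  have hev : (∑ t ∈ Finset.range p, (ζ ^ m) ^ t) =
      Polynomial.aeval ζ Φ * Polynomial.aeval ζ H := by
    have := congrArg (Polynomial.aeval ζ) hH
    rw [map_mul] at this
    rw [← this, hGdef, map_sum]
    congr 1
    ext t
    rw [map_pow, map_pow, Polynomial.aeval_X]
  by_cases hc : ζ ^ m = 1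
  · -- G(ζ) = p, and p ∣ d is invertible in R
    have hsum : Polynomial.aeval ζ Φ * Polynomial.aeval ζ H = (p : ℂ) := by
      rw [← hev, hc]
      simp
    refine ⟨Polynomial.aeval ζ H * ((d / p : ℕ) : ℂ) * ((d : ℂ))⁻¹,
      R.mul_mem (R.mul_mem (aeval_int_mem R hζR H) (natCast_mem R _)) hdR, ?_⟩
    have hd0 : (d : ℂ) ≠ 0 := Nat.cast_ne_zero.mpr (by omega)
    have hpdp : (p : ℂ) * ((d / p : ℕ) : ℂ) = (d : ℂ) := by
      rw [← Nat.cast_mul, Nat.mul_div_cancel' hpd]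
    calc Polynomial.aeval ζ Φ * (Polynomial.aeval ζ H * ((d / p : ℕ) : ℂ) * ((d : ℂ))⁻¹)
        = (Polynomial.aeval ζ Φ * Polynomial.aeval ζ H) * ((d / p : ℕ) : ℂ) * ((d : ℂ))⁻¹ := by
          ring
      _ = ((p : ℂ) * ((d / p : ℕ) : ℂ)) * ((d : ℂ))⁻¹ := by rw [hsum]
      _ = 1 := by rw [hpdp, mul_inv_cancel₀ hd0]
  · -- ζ^m ≠ 1 : geometric inverse
    -- find k with ζ^(s*k) = ζ^m
    set g := Nat.gcd s r with hgdef
    have hrp : Nat.Coprime r p := hcop.coprime_dvd_right hpd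
    have hgp : Nat.Coprime g p := Nat.Coprime.coprime_dvd_left (Nat.gcd_dvd_right s r) hrp
    have hgs : g ∣ s := Nat.gcd_dvd_left s r
    have hgm : g ∣ m := hgp.dvd_of_dvd_mul_left (by rw [← hm]; exact hgs)
    have hbez : (g : ℤ) = s * Nat.gcdA s r + r * Nat.gcdB s r := Nat.gcd_eq_gcd_ab s r
    set c' := m / g with hc'def
    have hgc' : (m : ℤ) = (g : ℤ) * (c' : ℤ) := by
      rw [← Nat.cast_mul, Nat.mul_div_cancel' hgm]
    set K : ℤ := (c' : ℤ) * Nat.gcdA s r with hKdef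
    have hKm : (s : ℤ) * K - (m : ℤ) = (r : ℤ) * (-((c' : ℤ) * Nat.gcdB s r)) := by
      rw [hKdef, hgc', hbez]; ring
    have hrZ : (r : ℤ) ≠ 0 := by exact_mod_cast hr0
    set k : ℕ := (K % (r : ℤ)).toNat with hkdef
    have hk : (k : ℤ) = K % (r : ℤ) := Int.toNat_of_nonneg (Int.emod_nonneg K hrZ)
    have hdvd2 : (r : ℤ) ∣ ((s : ℤ) * k - (m : ℤ)) := by
      have heq : (s : ℤ) * k - m = ((s : ℤ) * K - m) - (r : ℤ) * ((s : ℤ) * (K / (r : ℤ))) := by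
        rw [hk, Int.emod_def]; ring
      rw [heq, hKm]
      exact dvd_sub ⟨_, rfl⟩ ⟨_, rfl⟩
    have hζsk : ζ ^ (s * k) = ζ ^ m := by
      obtain ⟨e, he⟩ := hdvd2
      have h3 : ((s * k : ℕ) : ℤ) = (m : ℤ) + (r : ℤ) * e := by push_cast; linarith
      calc ζ ^ (s * k) = ζ ^ ((s * k : ℕ) : ℤ) := (zpow_natCast ζ (s * k)).symm
        _ = ζ ^ ((m : ℤ) + (r : ℤ) * e) := by rw [h3]
        _ = ζ ^ (m : ℤ) * (ζ ^ (r : ℤ)) ^ e := by rw [zpow_add₀ hζ0, zpow_mul]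
        _ = ζ ^ m := by rw [zpow_natCast, zpow_natCast, h1, one_zpow, mul_one]
    set SS : ℂ := ∑ t ∈ Finset.range k, (ζ ^ s) ^ t with hSSdef
    have e1 : (∑ t ∈ Finset.range p, (ζ ^ m) ^ t) * (ζ ^ m - 1) = ζ ^ s - 1 := by
      rw [geom_sum_mul, ← pow_mul, mul_comm m p, ← hm]
    have e2 : SS * (ζ ^ s - 1) = ζ ^ m - 1 := by
      rw [hSSdef, geom_sum_mul, ← pow_mul, hζsk]
    have hGSS : (∑ t ∈ Finset.range p, (ζ ^ m) ^ t) * SS = 1 := by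
      have hcne : ζ ^ m - 1 ≠ 0 := sub_ne_zero.mpr hc
      have : ((∑ t ∈ Finset.range p, (ζ ^ m) ^ t) * SS) * (ζ ^ m - 1) = 1 * (ζ ^ m - 1) := by
        calc ((∑ t ∈ Finset.range p, (ζ ^ m) ^ t) * SS) * (ζ ^ m - 1)
            = SS * ((∑ t ∈ Finset.range p, (ζ ^ m) ^ t) * (ζ ^ m - 1)) := by ring
          _ = SS * (ζ ^ s - 1) := by rw [e1]
          _ = 1 * (ζ ^ m - 1) := by rw [e2, one_mul]
      exact mul_right_cancel₀ hcne this
    refine ⟨Polynomial.aeval ζ H * SS,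
      R.mul_mem (aeval_int_mem R hζR H)
        (Subring.sum_mem R fun t _ => R.pow_mem (R.pow_mem hζR s) t), ?_⟩
    calc Polynomial.aeval ζ Φ * (Polynomial.aeval ζ H * SS)
        = (Polynomial.aeval ζ Φ * Polynomial.aeval ζ H) * SS := by ring
      _ = (∑ t ∈ Finset.range p, (ζ ^ m) ^ t) * SS := by rw [← hev]
      _ = 1 := hGSS


lemma ratfunc_denom_neg {K : Type*} [Field K] (x : RatFunc K) : (-x).denom = x.denom := by
  have key : ∀ y : RatFunc K, y.denom ∣ (-y).denom := by
    intro y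
    have h := RatFunc.num_denom_neg y
    have h2 : y.denom ∣ y.num * (-y).denom := by
      have h3 : y.num * (-y).denom = -((-y).num * y.denom) := by rw [h]; ring
      rw [h3]
      exact dvd_neg.mpr (dvd_mul_left y.denom ((-y).num))
    exact ((RatFunc.isCoprime_num_denom y).symm).dvd_of_dvd_mul_left h2
  have h1 := key x
  have h2 := key (-x)
  rw [neg_neg] at h2
  exact Polynomial.eq_of_monic_of_associated (RatFunc.monic_denom _) (RatFunc.monic_denom _)
    (associated_of_dvd_dvd h2 h1)

lemma ratfunc_num_neg {K : Type*} [Field K] (x : RatFunc K) : (-x).num = -x.num := by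
  have h := RatFunc.num_denom_neg x
  rw [ratfunc_denom_neg] at h
  exact mul_right_cancel₀ (RatFunc.denom_ne_zero x) h

lemma ratfunc_eval_neg (f : ℚ →+* ℂ) (a : ℂ) (x : RatFunc ℚ) :
    RatFunc.eval f a (-x) = - RatFunc.eval f a x := by
  simp only [RatFunc.eval, ratfunc_num_neg, ratfunc_denom_neg, Polynomial.eval₂_neg, neg_div]

lemma inv_algebraMap_num_denom {q : Polynomial ℚ} (hq : q.Monic) :
    ((algebraMap (Polynomial ℚ) (RatFunc ℚ) q)⁻¹).num = 1 ∧
    ((algebraMap (Polynomial ℚ) (RatFunc ℚ) q)⁻¹).denom = q := by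
  set y := (algebraMap (Polynomial ℚ) (RatFunc ℚ) q)⁻¹ with hy
  have hq0 : algebraMap (Polynomial ℚ) (RatFunc ℚ) q ≠ 0 :=
    RatFunc.algebraMap_ne_zero hq.ne_zero
  have hyq : y * algebraMap (Polynomial ℚ) (RatFunc ℚ) q = 1 := inv_mul_cancel₀ hq0
  have hd0 : algebraMap (Polynomial ℚ) (RatFunc ℚ) y.denom ≠ 0 :=
    RatFunc.algebraMap_ne_zero (RatFunc.denom_ne_zero y)
  have h1 : (algebraMap (Polynomial ℚ) (RatFunc ℚ) y.num /
      algebraMap (Polynomial ℚ) (RatFunc ℚ) y.denom) *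
      algebraMap (Polynomial ℚ) (RatFunc ℚ) q = 1 := by
    rw [RatFunc.num_div_denom]; exact hyq
  have h2 : algebraMap (Polynomial ℚ) (RatFunc ℚ) y.num *
      algebraMap (Polynomial ℚ) (RatFunc ℚ) q =
      algebraMap (Polynomial ℚ) (RatFunc ℚ) y.denom := by
    rw [div_mul_eq_mul_div, div_eq_one_iff_eq hd0] at h1
    exact h1
  have key : y.num * q = y.denom := by
    apply RatFunc.algebraMap_injective
    rw [map_mul]; exact h2
  have hnum_monic : y.num.Monic := by
    refine Polynomial.Monic.of_mul_monic_right hq ?_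
    rw [key]; exact RatFunc.monic_denom y
  have hnum_dvd : y.num ∣ y.denom := ⟨q, key.symm⟩
  have hnum_unit : IsUnit y.num :=
    (RatFunc.isCoprime_num_denom y).isUnit_of_dvd' dvd_rfl hnum_dvd
  have hnum1 : y.num = 1 := hnum_monic.eq_one_of_isUnit hnum_unit
  exact ⟨hnum1, by rw [← key, hnum1, one_mul]⟩

lemma eval_inv_algebraMap {q : Polynomial ℚ} (hq : q.Monic) (f : ℚ →+* ℂ) (a : ℂ) :
    RatFunc.eval f a ((algebraMap (Polynomial ℚ) (RatFunc ℚ) q)⁻¹) =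
      (Polynomial.eval₂ f a q)⁻¹ := by
  simp only [RatFunc.eval, (inv_algebraMap_num_denom hq).1, (inv_algebraMap_num_denom hq).2,
    Polynomial.eval₂_one, one_div]
lemma aeval_X_eq_algebraMap (p : Polynomial ℚ) :
    Polynomial.aeval RatFunc.X p = algebraMap (Polynomial ℚ) (RatFunc ℚ) p := by
  induction p using Polynomial.induction_on' with
  | add p q hp hq => rw [map_add, map_add, hp, hq]
  | monomial n c =>
    rw [Polynomial.aeval_monomial, ← Polynomial.C_mul_X_pow_eq_monomial, map_mul, map_pow,
      RatFunc.algebraMap_C, RatFunc.algebraMap_X]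
    rw [eq_ratCast (algebraMap ℚ (RatFunc ℚ)) c, eq_ratCast RatFunc.C c]

/-- The subring of rational functions whose (reduced) denominator does not vanish at `ζ` and
whose value at `ζ` lies in `R`. -/
def evalSubring (ζ : ℂ) (R : Subring ℂ) : Subring (RatFunc ℚ) where
  carrier := {x | Polynomial.eval₂ (algebraMap ℚ ℂ) ζ x.denom ≠ 0 ∧
      RatFunc.eval (algebraMap ℚ ℂ) ζ x ∈ R}
  zero_mem' := ⟨by simp, by simpa using R.zero_mem⟩
  one_mem' := ⟨by simp, by simpa using R.one_mem⟩
  add_mem' := fun {a b} ha hb => by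
    refine ⟨?_, ?_⟩
    · intro h0
      have h := Polynomial.eval₂_eq_zero_of_dvd_of_eval₂_eq_zero (algebraMap ℚ ℂ) ζ
        (RatFunc.denom_add_dvd a b) h0
      rw [Polynomial.eval₂_mul] at h
      rcases mul_eq_zero.mp h with h | h
      exacts [ha.1 h, hb.1 h]
    · rw [RatFunc.eval_add (algebraMap ℚ ℂ) ζ ha.1 hb.1]
      exact R.add_mem ha.2 hb.2
  mul_mem' := fun {a b} ha hb => by
    refine ⟨?_, ?_⟩
    · intro h0
      have h := Polynomial.eval₂_eq_zero_of_dvd_of_eval₂_eq_zero (algebraMap ℚ ℂ) ζ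
        (RatFunc.denom_mul_dvd a b) h0
      rw [Polynomial.eval₂_mul] at h
      rcases mul_eq_zero.mp h with h | h
      exacts [ha.1 h, hb.1 h]
    · rw [RatFunc.eval_mul (algebraMap ℚ ℂ) ζ ha.1 hb.1]
      exact R.mul_mem ha.2 hb.2
  neg_mem' := fun {a} ha => by
    refine ⟨?_, ?_⟩
    · rw [ratfunc_denom_neg]; exact ha.1
    · rw [ratfunc_eval_neg]; exact R.neg_mem ha.2

lemma mem_evalSubring {ζ : ℂ} {R : Subring ℂ} {x : RatFunc ℚ} :
    x ∈ evalSubring ζ R ↔ (Polynomial.eval₂ (algebraMap ℚ ℂ) ζ x.denom ≠ 0 ∧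
      RatFunc.eval (algebraMap ℚ ℂ) ζ x ∈ R) := Iff.rfl

end Stmt16Aux

/-- Let `ξ ∈ U_d` (a root of unity of odd order `r` coprime to `d`) and
`b` with `db ≡ 1 (mod r)`.  For every `g ∈ Λ̂_d`, the evaluation `ev_ξ(g)` — obtained by
evaluating (a representative of) the `r`-th component of `g` at `t = ξ^b` — lies in the
subring `ℤ[1/d][ξ]` of `ℂ` generated by `1/d` and `ξ`. -/
theorem evaluation_mem_cyclotomic_ring (d : ℕ) (hd : 1 ≤ d) (ξ : ℂ) (r : ℕ)
    (hodd : Odd r) (hcop : Nat.Coprime r d) (hprim : IsPrimitiveRoot ξ r)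
    (b : ℤ) (hb : (d : ℤ) * b ≡ 1 [ZMOD (r : ℤ)]) (g : LamHat d) :
    RatFunc.eval (algebraMap ℚ ℂ) (ξ ^ b)
        ((Quotient.out (g.1 r) : Gd d) : RatFunc ℚ) ∈
      Subring.closure {((d : ℂ))⁻¹, ξ} := by
  classical
  set R : Subring ℂ := Subring.closure {((d : ℂ))⁻¹, ξ} with hRdef
  have hdR : ((d : ℂ))⁻¹ ∈ R := Subring.subset_closure (by simp)
  have hξR : ξ ∈ R := Subring.subset_closure (by simp)
  have hr0 : r ≠ 0 := by
    rcases hodd with ⟨t, ht⟩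
    omega
  have hξr : ξ ^ r = 1 := hprim.pow_eq_one
  have hζR : ξ ^ b ∈ R := Stmt16Aux.zpow_mem R hξR hr0 hξr b
  have hζr : (ξ ^ b) ^ r = 1 := by
    rw [← zpow_natCast (ξ ^ b) r, ← zpow_mul, mul_comm, zpow_mul, zpow_natCast, hξr, one_zpow]
  have hζ0 : ξ ^ b ≠ 0 := by
    intro h
    rw [h, zero_pow hr0] at hζr
    exact zero_ne_one hζr
  have hζiR : (ξ ^ b)⁻¹ ∈ R := by
    rw [← zpow_neg]
    exact Stmt16Aux.zpow_mem R hξR hr0 hξr (-b)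
  have hGdle : Gd d ≤ Stmt16Aux.evalSubring (ξ ^ b) R := by
    unfold Gd
    refine Subring.closure_le.mpr ?_
    intro x hx
    rcases hx with hx | ⟨s, hs1, hsgcd, rfl⟩
    · simp only [Set.mem_insert_iff, Set.mem_singleton_iff] at hx
      rcases hx with rfl | rfl | rfl
      · have hCd : ((d : RatFunc ℚ))⁻¹ = RatFunc.C (((d : ℚ))⁻¹) := by
          rw [← map_natCast (RatFunc.C : ℚ →+* RatFunc ℚ) d, ← map_inv₀]
        rw [hCd]
        refine Stmt16Aux.mem_evalSubring.mpr ⟨?_, ?_⟩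
        · rw [RatFunc.denom_C]
          simp
        · rw [RatFunc.eval_C, map_inv₀, map_natCast]
          exact hdR
      · refine Stmt16Aux.mem_evalSubring.mpr ⟨?_, ?_⟩
        · rw [RatFunc.denom_X]
          simp
        · rw [RatFunc.eval_X]
          exact hζR
      · rw [← RatFunc.algebraMap_X]
        refine Stmt16Aux.mem_evalSubring.mpr ⟨?_, ?_⟩
        · rw [(Stmt16Aux.inv_algebraMap_num_denom monic_X).2]
          simpa using hζ0
        · rw [Stmt16Aux.eval_inv_algebraMap monic_X]
          simpa using hζiR
    · rw [Stmt16Aux.aeval_X_eq_algebraMap]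
      have hmon : (cyclotomic s ℚ).Monic := cyclotomic.monic s ℚ
      have hconv : Polynomial.eval₂ (algebraMap ℚ ℂ) (ξ ^ b) (cyclotomic s ℚ) =
          Polynomial.aeval (ξ ^ b) (cyclotomic s ℤ) := by
        rw [← map_cyclotomic_int s ℚ, Polynomial.eval₂_map, Polynomial.aeval_def]
        congr 1
      obtain ⟨w, hwR, hw⟩ := Stmt16Aux.key d hd R hdR (ξ ^ b) hζR r hr0 hζr hcop s hs1 hsgcd
      have hZne : Polynomial.aeval (ξ ^ b) (cyclotomic s ℤ) ≠ 0 :=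
        left_ne_zero_of_mul_eq_one hw
      refine Stmt16Aux.mem_evalSubring.mpr ⟨?_, ?_⟩
      · rw [(Stmt16Aux.inv_algebraMap_num_denom hmon).2, hconv]
        exact hZne
      · rw [Stmt16Aux.eval_inv_algebraMap hmon, hconv, inv_eq_of_mul_eq_one_right hw]
        exact hwR
  exact (hGdle (Quotient.out (g.1 r) : Gd d).2).2


end
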